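/- Let R be a commutative Noetherian ring, Φ a system of ideals of R, M an arbitrary R-module, and t a non-negative integer. Then H^i_Φ(M) = 0 for all i < t if and only if H^i_𝔞(M) = 0 for all i < t and all 𝔞 ∈ Φ. -/

import Mathlib

open CategoryTheory CategoryTheory.Limits Opposite

noncomputable section

section Preliminaries

variable {R : Type} [CommRing R]

/-- A *system of ideals* of `R`: a nonempty set of ideals `Φ` such that for all
`a, b ∈ Φ` there is `c ∈ Φ` with `c ⊆ a * b`. -/
def Ideal.IsSystem (Φ : Set (Ideal R)) : Prop :=
  Φ.Nonempty ∧ ∀ a ∈ Φ, ∀ b ∈ Φ, ∃ c ∈ Φ, c ≤ a * b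

/-- The `Φ`-torsion submodule `Γ_Φ(M)`; for a system of ideals `Φ` it is
`{x ∈ M | a • x = 0 for some a ∈ Φ}`. -/
def phiTorsion (Φ : Set (Ideal R)) (M : ModuleCat.{0} R) : Submodule R M :=
  ⨆ a ∈ Φ, Submodule.torsionBySet R M (a : Set R)

lemma phiTorsion_le_comap (Φ : Set (Ideal R)) {M N : ModuleCat.{0} R} (f : M ⟶ N) :
    phiTorsion Φ M ≤ (phiTorsion Φ N).comap f.hom := by
  refine iSup₂_le fun a ha => le_trans ?_ (Submodule.comap_mono
    (le_iSup₂ (f := fun (a : Ideal R) (_ : a ∈ Φ) => Submodule.torsionBySet R N (a : Set R)) a ha))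
  intro x hx
  rw [Submodule.mem_torsionBySet_iff] at hx
  rw [Submodule.mem_comap, Submodule.mem_torsionBySet_iff]
  intro r
  have h : f.hom ((r : R) • x) = (r : R) • f.hom x := map_smul f.hom (r : R) x
  rw [hx r, map_zero] at h
  exact h.symm

/-- The `Φ`-torsion functor `Γ_Φ(-)`. -/
def phiTorsionFunctor (Φ : Set (Ideal R)) : ModuleCat.{0} R ⥤ ModuleCat.{0} R where
  obj M := ModuleCat.of R (phiTorsion Φ M)
  map {M N} f := ModuleCat.ofHom (LinearMap.restrict f.hom (fun x hx => phiTorsion_le_comap Φ f hx))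
  map_id M := by ext x; rfl
  map_comp f g := by ext x; rfl

instance (Φ : Set (Ideal R)) : (phiTorsionFunctor Φ).Additive where
  map_add := by intros; ext x; rfl

/-- General local cohomology `H^i_Φ(-)`: the `i`-th right derived functor of `Γ_Φ(-)`. -/
def glc (Φ : Set (Ideal R)) (i : ℕ) : ModuleCat.{0} R ⥤ ModuleCat.{0} R :=
  (phiTorsionFunctor Φ).rightDerived i

/-- Ordinary local cohomology `H^i_a(-)`: the `i`-th right derived functor of the
`a`-torsion functor `Γ_a(-) = Γ_Φ(-)` where `Φ = {a^n : n ∈ ℕ}`. -/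
def olc (a : Ideal R) (i : ℕ) : ModuleCat.{0} R ⥤ ModuleCat.{0} R :=
  glc {I : Ideal R | ∃ n : ℕ, I = a ^ n} i

/-- `Ext^n_R(N, M)` as an `R`-module. -/
def extM (n : ℕ) (N M : ModuleCat.{0} R) : ModuleCat.{0} R :=
  ((Ext R (ModuleCat.{0} R) n).obj (op N)).obj M

/-- A Serre subcategory of the category of `R`-modules, given by the class of its
objects: for every short exact sequence `0 → X₁ → X₂ → X₃ → 0`, `X₂` belongs to
the class iff both `X₁` and `X₃` do. -/
structure SerreClass (R : Type) [CommRing R] : Type 1 where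
  mem : ModuleCat.{0} R → Prop
  shortExact_iff : ∀ {S : ShortComplex (ModuleCat.{0} R)}, S.ShortExact →
    (mem S.X₂ ↔ mem S.X₁ ∧ mem S.X₃)

/-- `X` is an `a`-torsion module: every element is annihilated by some power of `a`. -/
def IsIdealTorsion (a : Ideal R) (X : ModuleCat.{0} R) : Prop :=
  ∀ x : X, ∃ n : ℕ, ∀ r ∈ a ^ n, r • x = 0

/-- A Serre class is a *Melkersson subcategory* with respect to `a` if for every
`a`-torsion module `X`, `(0 :_X a) ∈ S` implies `X ∈ S`. -/
def SerreClass.IsMelkersson (S : SerreClass R) (a : Ideal R) : Prop :=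
  ∀ X : ModuleCat.{0} R, IsIdealTorsion a X →
    S.mem (ModuleCat.of R (Submodule.torsionBySet R X (a : Set R))) → S.mem X

/-- The dimension of a module: the Krull dimension of its support
(so it equals `⊥ = -1` exactly for the zero module). -/
def moduleDim (R : Type) [CommRing R] (M : Type) [AddCommGroup M] [Module R M] :
    WithBot ℕ∞ :=
  Order.krullDim (Module.support R M)

/-- Interpret an integer `k ≥ -1` as an element of `{-1, 0, 1, ...} ∪ {∞}`. -/
def intDim (k : ℤ) : WithBot ℕ∞ := if k < 0 then ⊥ else ((k.toNat : ℕ∞) : WithBot ℕ∞)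

end Preliminaries

section Aux

variable {R : Type} [CommRing R]

/-- The system of powers of a fixed ideal. -/
def psys (a : Ideal R) : Set (Ideal R) := {I : Ideal R | ∃ n : ℕ, I = a ^ n}

lemma psys_nonempty (a : Ideal R) : (psys a).Nonempty := ⟨a, 1, (pow_one a).symm⟩

lemma psys_directed (a : Ideal R) :
    ∀ I ∈ psys a, ∀ J ∈ psys a, ∃ c ∈ psys a, c ≤ I ∧ c ≤ J := by
  rintro _ ⟨n, rfl⟩ _ ⟨m, rfl⟩
  exact ⟨a ^ (n + m), ⟨n + m, rfl⟩, Ideal.pow_le_pow_right (Nat.le_add_right n m),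
    Ideal.pow_le_pow_right (Nat.le_add_left m n)⟩

lemma sys_directed {Φ : Set (Ideal R)} (hΦ : Ideal.IsSystem Φ) :
    ∀ I ∈ Φ, ∀ J ∈ Φ, ∃ c ∈ Φ, c ≤ I ∧ c ≤ J := by
  intro I hI J hJ
  obtain ⟨c, hc, hle⟩ := hΦ.2 I hI J hJ
  exact ⟨c, hc, hle.trans Ideal.mul_le_left, hle.trans Ideal.mul_le_right⟩

lemma sys_cofinal {Φ : Set (Ideal R)} (hΦ : Ideal.IsSystem Φ) {a : Ideal R} (ha : a ∈ Φ)
    (n : ℕ) : ∃ c ∈ Φ, c ≤ a ^ n := by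
  induction n with
  | zero => exact ⟨a, ha, by simp⟩
  | succ n ih =>
    obtain ⟨c, hc, hca⟩ := ih
    obtain ⟨d, hd, hdc⟩ := hΦ.2 a ha c hc
    refine ⟨d, hd, hdc.trans ?_⟩
    calc a * c ≤ a * a ^ n := Ideal.mul_mono_right hca
      _ = a ^ (n + 1) := by rw [pow_succ, mul_comm]

lemma mem_phiTorsion_of {Φ : Set (Ideal R)} {N : ModuleCat.{0} R} {a : Ideal R} (ha : a ∈ Φ)
    {x : N} (hx : x ∈ Submodule.torsionBySet R N (a : Set R)) : x ∈ phiTorsion Φ N :=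
  (le_iSup₂ (f := fun (a : Ideal R) (_ : a ∈ Φ) =>
    Submodule.torsionBySet R N (a : Set R)) a ha) hx

lemma mem_phiTorsion_iff {Φ : Set (Ideal R)} (hne : Φ.Nonempty)
    (hdir : ∀ I ∈ Φ, ∀ J ∈ Φ, ∃ c ∈ Φ, c ≤ I ∧ c ≤ J) {N : ModuleCat.{0} R} (x : N) :
    x ∈ phiTorsion Φ N ↔ ∃ a ∈ Φ, x ∈ Submodule.torsionBySet R N (a : Set R) := by
  have : Nonempty Φ := hne.to_subtype
  rw [phiTorsion, iSup_subtype', Submodule.mem_iSup_of_directed]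
  · constructor
    · rintro ⟨⟨a, ha⟩, h⟩; exact ⟨a, ha, h⟩
    · rintro ⟨a, ha, h⟩; exact ⟨⟨a, ha⟩, h⟩
  · rintro ⟨a, ha⟩ ⟨b, hb⟩
    obtain ⟨c, hc, hca, hcb⟩ := hdir a ha b hb
    exact ⟨⟨c, hc⟩,
      Submodule.torsionBySet_le_torsionBySet_of_subset hca,
      Submodule.torsionBySet_le_torsionBySet_of_subset hcb⟩

lemma map_mem_torsionBySet {N P : ModuleCat.{0} R} (f : N →ₗ[R] P) {s : Set R} {x : N}
    (hx : x ∈ Submodule.torsionBySet R N s) : f x ∈ Submodule.torsionBySet R P s := by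
  rw [Submodule.mem_torsionBySet_iff] at hx ⊢
  intro r
  rw [← map_smul, hx r, map_zero]

/-- Concrete exactness statement for the `Ψ`-torsion subcomplex of `C` at degree `n`. -/
def ES (Ψ : Set (Ideal R)) (C : CochainComplex (ModuleCat.{0} R) ℕ) (n : ℕ) : Prop :=
  ∀ x : C.X n, x ∈ phiTorsion Ψ (C.X n) → C.d n (n + 1) x = 0 →
    ∃ y, ∃ _ : y ∈ phiTorsion Ψ (C.X (n - 1)), C.d (n - 1) n y = x

lemma exactAt_iff_ES (Ψ : Set (Ideal R)) (C : CochainComplex (ModuleCat.{0} R) ℕ) (n : ℕ) :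
    (((phiTorsionFunctor Ψ).mapHomologicalComplex (ComplexShape.up ℕ)).obj C).ExactAt n ↔
      ES Ψ C n := by
  have hprev : (ComplexShape.up ℕ).prev n = n - 1 := by
    cases n with
    | zero => exact CochainComplex.prev_nat_zero
    | succ n => exact CochainComplex.prev_nat_succ n
  rw [HomologicalComplex.exactAt_iff' _ (n - 1) n (n + 1) hprev (CochainComplex.next ℕ n),
    ShortComplex.moduleCat_exact_iff]
  set K := ((phiTorsionFunctor Ψ).mapHomologicalComplex (ComplexShape.up ℕ)).obj C with hK
  constructor
  · intro h x hx hdx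
    have h0 : K.d n (n + 1) (⟨x, hx⟩ : phiTorsion Ψ (C.X n)) = 0 := Subtype.ext (show C.d n (n + 1) x = 0 from hdx)
    obtain ⟨y, hy⟩ := h (⟨x, hx⟩ : phiTorsion Ψ (C.X n)) h0
    exact ⟨y.1, y.2, congrArg Subtype.val hy⟩
  · intro h x hdx
    obtain ⟨y, hy, hdy⟩ := h (x : phiTorsion Ψ (C.X n)).1 (x : phiTorsion Ψ (C.X n)).2
      (congrArg Subtype.val (hdx : (_ : phiTorsion Ψ (C.X (n + 1))) = 0))
    exact ⟨⟨y, hy⟩, Subtype.ext hdy⟩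

lemma subsingleton_of_isZero {N : ModuleCat.{0} R} (h : IsZero N) : Subsingleton N := by
  constructor
  intro x y
  have hid : (𝟙 N : N ⟶ N) = 0 := h.eq_of_src _ _
  calc x = (𝟙 N : N ⟶ N) x := rfl
    _ = (0 : N ⟶ N) x := by rw [hid]
    _ = (𝟙 N : N ⟶ N) y := by rw [hid]; rfl
    _ = y := rfl

lemma subsingleton_glc_iff (Ψ : Set (Ideal R)) (M : ModuleCat.{0} R)
    (I : InjectiveResolution M) (i : ℕ) :
    Subsingleton ((glc Ψ i).obj M) ↔ ES Ψ I.cocomplex i := by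
  rw [← exactAt_iff_ES, HomologicalComplex.exactAt_iff_isZero_homology]
  have e := I.isoRightDerivedObj (phiTorsionFunctor Ψ) i
  constructor
  · intro h
    have z : IsZero ((glc Ψ i).obj M) := @ModuleCat.isZero_of_subsingleton _ _ _ h
    exact z.of_iso e.symm
  · intro h
    exact subsingleton_of_isZero (h.of_iso e)

/-- The partial contracting homotopy built from exactness and injectivity. -/
lemma exists_homotopy {Φ : Set (Ideal R)} (C : CochainComplex (ModuleCat.{0} R) ℕ)
    (inj : ∀ n, Injective (C.X n)) (t : ℕ) (hES : ∀ n < t, ES Φ C n) :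
    ∀ n, n < t → ∃ h : C.X n →ₗ[R] C.X (n - 1),
      ∀ x : C.X n, x ∈ phiTorsion Φ (C.X n) → C.d n (n + 1) x = 0 →
        C.d (n - 1) n (h x) = x := by
  intro n
  induction n with
  | zero =>
    intro h0
    refine ⟨0, fun x hx hdx => ?_⟩
    obtain ⟨y, hy, hdy⟩ := hES 0 h0 x hx hdx
    have hd00 : C.d (0 - 1) 0 = 0 := C.shape _ _ (by simp)
    rw [hd00] at hdy ⊢
    rw [← hdy]
    rfl
  | succ n ihn =>
    intro hlt
    have hn : n < t := Nat.lt_of_succ_lt hlt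
    obtain ⟨h0, hh0⟩ := ihn hn
    set Kn := phiTorsion Φ (C.X n) with hKn
    let D : Kn →ₗ[R] C.X (n + 1) :=
      (C.d n (n + 1)).hom.comp Kn.subtype
    let φ : Kn →ₗ[R] C.X n :=
      Kn.subtype - ((C.d (n - 1) n).hom.comp (h0.comp Kn.subtype))
    have hker : LinearMap.ker D ≤ LinearMap.ker φ := by
      rintro ⟨z, hz⟩ hzD
      have hdz : C.d n (n + 1) z = 0 := hzD
      have hz0 : C.d (n - 1) n (h0 z) = z := hh0 z hz hdz
      show (⟨z, hz⟩ : Kn).1 - C.d (n - 1) n (h0 (⟨z, hz⟩ : Kn).1) = 0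
      rw [hz0]; exact sub_self z
    let ψ : LinearMap.range D →ₗ[R] C.X n :=
      ((LinearMap.ker D).liftQ φ hker).comp (D.quotKerEquivRange.symm : _ →ₗ[R] _)
    have hψ : ∀ z : Kn, ψ ⟨D z, LinearMap.mem_range_self D z⟩ = φ z := by
      intro z
      show ((LinearMap.ker D).liftQ φ hker)
        (D.quotKerEquivRange.symm ⟨D z, LinearMap.mem_range_self D z⟩) = φ z
      rw [LinearMap.quotKerEquivRange_symm_apply_image]
      rfl
    let ι : ModuleCat.of R (LinearMap.range D) ⟶ C.X (n + 1) := ModuleCat.ofHom (LinearMap.range D).subtype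
    let ψ' : ModuleCat.of R (LinearMap.range D) ⟶ C.X n := ModuleCat.ofHom ψ
    haveI : Mono ι := by
      rw [ModuleCat.mono_iff_injective]
      exact Subtype.val_injective
    haveI := inj n
    let hstep : C.X (n + 1) ⟶ C.X n := Injective.factorThru ψ' ι
    have hfac : ∀ z : LinearMap.range D, hstep z.1 = ψ z := by
      intro z
      have h1 := Injective.comp_factorThru ψ' ι
      exact LinearMap.congr_fun (congrArg ModuleCat.Hom.hom h1) z
    refine ⟨hstep.hom, fun x hx hdx => ?_⟩
    obtain ⟨y0, hy0, hdy0⟩ := hES (n + 1) hlt x hx hdx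
    have hy : y0 ∈ Kn := hy0
    have hdy : C.d n (n + 1) y0 = x := hdy0
    set y : (C.X n : Type) := y0 with hy_def
    have hxr : x ∈ LinearMap.range D := ⟨⟨y, hy⟩, hdy⟩
    have hx1 : hstep x = φ ⟨y, hy⟩ := by
      have h1 := hfac ⟨x, hxr⟩
      have h2 : (⟨x, hxr⟩ : LinearMap.range D) =
          ⟨D ⟨y, hy⟩, LinearMap.mem_range_self D ⟨y, hy⟩⟩ := Subtype.ext hdy.symm
      rw [h1, h2, hψ]
    show C.d n (n + 1) (hstep x) = x
    rw [hx1]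
    have hφ : φ ⟨y, hy⟩ = y - C.d (n - 1) n (h0 y) := rfl
    rw [hφ, map_sub, hdy]
    have hdd : C.d (n - 1) n ≫ C.d n (n + 1) = 0 := C.d_comp_d _ _ _
    have hz : C.d n (n + 1) (C.d (n - 1) n (h0 y)) = 0 := LinearMap.congr_fun (congrArg ModuleCat.Hom.hom hdd) (h0 y)
    rw [hz, sub_zero]

lemma lemA {Φ : Set (Ideal R)} (hΦ : Ideal.IsSystem Φ)
    (C : CochainComplex (ModuleCat.{0} R) ℕ) (t : ℕ)
    (h : ∀ a ∈ Φ, ∀ n < t, ES (psys a) C n) : ∀ n < t, ES Φ C n := by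
  intro n hn x hx hdx
  rw [mem_phiTorsion_iff hΦ.1 (sys_directed hΦ)] at hx
  obtain ⟨a, ha, hxa⟩ := hx
  have hxa' : x ∈ phiTorsion (psys a) (C.X n) :=
    mem_phiTorsion_of (show a ∈ psys a from ⟨1, (pow_one a).symm⟩) hxa
  obtain ⟨y, hy, hdy⟩ := h a ha n hn x hxa' hdx
  rw [mem_phiTorsion_iff (psys_nonempty a) (psys_directed a)] at hy
  obtain ⟨I, ⟨k, rfl⟩, hyk⟩ := hy
  obtain ⟨c, hc, hck⟩ := sys_cofinal hΦ ha k
  exact ⟨y, mem_phiTorsion_of hc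
    (Submodule.torsionBySet_le_torsionBySet_of_subset hck hyk), hdy⟩

lemma lemB {Φ : Set (Ideal R)} (hΦ : Ideal.IsSystem Φ)
    (C : CochainComplex (ModuleCat.{0} R) ℕ) (inj : ∀ n, Injective (C.X n)) (t : ℕ)
    (h : ∀ n < t, ES Φ C n) : ∀ a ∈ Φ, ∀ n < t, ES (psys a) C n := by
  intro a ha n hn x hx hdx
  obtain ⟨hmap, hprop⟩ := exists_homotopy C inj t h n hn
  rw [mem_phiTorsion_iff (psys_nonempty a) (psys_directed a)] at hx
  obtain ⟨I, ⟨k, rfl⟩, hxk⟩ := hx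
  obtain ⟨c, hc, hck⟩ := sys_cofinal hΦ ha k
  have hxΦ : x ∈ phiTorsion Φ (C.X n) := mem_phiTorsion_of hc
    (Submodule.torsionBySet_le_torsionBySet_of_subset hck hxk)
  exact ⟨hmap x, mem_phiTorsion_of (show a ^ k ∈ psys a from ⟨k, rfl⟩)
    (map_mem_torsionBySet hmap hxk), hprop x hxΦ hdx⟩

end Aux

/-- **Corollary 3.8.** `H^i_Φ(M) = 0` for all `i < t` iff `H^i_a(M) = 0` for all `i < t`
and all `a ∈ Φ`. -/
theorem stmt16 (R : Type) [CommRing R] [IsNoetherianRing R]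
    (Φ : Set (Ideal R)) (hΦ : Ideal.IsSystem Φ)
    (M : ModuleCat.{0} R) (t : ℕ) :
    (∀ i < t, Subsingleton ((glc Φ i).obj M)) ↔
      (∀ a ∈ Φ, ∀ i < t, Subsingleton ((olc a i).obj M)) := by
  obtain ⟨I⟩ := (HasInjectiveResolution.out (Z := M))
  have inj : ∀ n, Injective (I.cocomplex.X n) := I.injective
  constructor
  · intro H a ha i hi
    rw [show olc a i = glc (psys a) i from rfl, subsingleton_glc_iff _ M I i]
    exact lemB hΦ I.cocomplex inj t
      (fun n hn => (subsingleton_glc_iff _ M I n).1 (H n hn)) a ha i hi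
  · intro H i hi
    rw [subsingleton_glc_iff _ M I i]
    exact lemA hΦ I.cocomplex t
      (fun a ha n hn => (subsingleton_glc_iff _ M I n).1
        ((show olc a n = glc (psys a) n from rfl) ▸ H a ha n hn)) i hi

end
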